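/- Let n ≥ 2 and consider the vectors of ℤⁿ: v_1 = 2e_1 − e_2, v_i = −e_{i−1} + 2e_i − e_{i+1} for 2 ≤ i ≤ n−1, and v_n = −2e_{n−1} + 2e_n. Then the subgroup of ℤⁿ generated by v_1, …, v_n is exactly {(a_1, …, a_n) ∈ ℤⁿ : the sum of the a_i over all odd indices i is even}. -/

import Mathlib

/-- The standard basis vectors `e_1, …, e_n` of `ℤⁿ` (indexed `1`-based), with the
convention that `e_j = 0` for `j` outside `{1, …, n}` (in particular `e_0 = e_{n+1} = 0`). -/
def stdE (n j : ℕ) : Fin n → ℤ :=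
  if h : 1 ≤ j ∧ j ≤ n then Pi.single (⟨j - 1, by omega⟩ : Fin n) 1 else 0

/-- Type `B_n` vectors: `v_1 = 2e_1 - e_2`, `v_i = -e_{i-1} + 2e_i - e_{i+1}` for
`2 ≤ i ≤ n-1`, and `v_n = -2e_{n-1} + 2e_n`. -/
def vB (n i : ℕ) : Fin n → ℤ :=
  if i = n then -(2 • stdE n (n - 1)) + 2 • stdE n n
  else -(stdE n (i - 1)) + 2 • stdE n i - stdE n (i + 1)

namespace Stmt13Aux

variable {n : ℕ}

/-- `d = e_n - e_{n-1}`. -/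
def dV (n : ℕ) : Fin n → ℤ := stdE n n - stdE n (n - 1)

/-- `p_i = e_i - e_{i-1} + d`. -/
def pV (n i : ℕ) : Fin n → ℤ := stdE n i - stdE n (i - 1) + dV n

/-- `q_j = e_j + j • d`. -/
def qV (n j : ℕ) : Fin n → ℤ := stdE n j + (j : ℤ) • dV n

lemma stdE_of_not (j : ℕ) (h : ¬ (1 ≤ j ∧ j ≤ n)) : stdE n j = 0 := dif_neg h

lemma stdE_fin (k : Fin n) : stdE n ((k : ℕ) + 1) = Pi.single k 1 := by
  have h : 1 ≤ (k : ℕ) + 1 ∧ (k : ℕ) + 1 ≤ n := ⟨Nat.le_add_left _ _, k.isLt⟩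
  rw [stdE, dif_pos h]
  congr 1

/-- The "odd coordinate sum". -/
def S (g : Fin n → ℤ) : ℤ :=
  ∑ k ∈ Finset.univ.filter (fun k : Fin n => Odd ((k : ℕ) + 1)), g k

lemma S_add (g h : Fin n → ℤ) : S (g + h) = S g + S h := by
  simp [S, Finset.sum_add_distrib]

lemma S_neg (g : Fin n → ℤ) : S (-g) = -S g := by
  simp [S]

lemma S_sub (g h : Fin n → ℤ) : S (g - h) = S g - S h := by
  simp [S, Finset.sum_sub_distrib]

lemma S_smul (c : ℕ) (g : Fin n → ℤ) : S (c • g) = c * S g := by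
  simp [S, Finset.mul_sum]

lemma S_stdE (j : ℕ) (h1 : 1 ≤ j) (h2 : j ≤ n) :
    S (n := n) (stdE n j) = if Odd j then 1 else 0 := by
  rw [S, stdE, dif_pos ⟨h1, h2⟩]
  simp only [Pi.single_apply]
  rw [Finset.sum_ite_eq' ]
  have hj : (⟨j - 1, by omega⟩ : Fin n) ∈ Finset.univ.filter
      (fun k : Fin n => Odd ((k : ℕ) + 1)) ↔ Odd j := by
    simp only [Finset.mem_filter, Finset.mem_univ, true_and]
    have : j - 1 + 1 = j := by omega
    rw [this]
  by_cases h : Odd j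
  · rw [if_pos (hj.2 h), if_pos h]
  · rw [if_neg (fun hm => h (hj.1 hm)), if_neg h]

/-- The target subgroup. -/
def K (n : ℕ) : AddSubgroup (Fin n → ℤ) where
  carrier := {a | (2 : ℤ) ∣ S a}
  add_mem' := by
    intro a b ha hb
    simpa [Set.mem_setOf_eq, S_add] using dvd_add ha hb
  zero_mem' := by simp [Set.mem_setOf_eq, S]
  neg_mem' := by
    intro a ha
    simpa [Set.mem_setOf_eq, S_neg] using ha.neg_right

lemma gen_subset (hn : 2 ≤ n) : vB n '' Set.Icc 1 n ⊆ (K n : Set (Fin n → ℤ)) := by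
  rintro _ ⟨i, ⟨hi1, hi2⟩, rfl⟩
  show (2 : ℤ) ∣ S (vB n i)
  by_cases he : i = n
  · rw [vB, if_pos he, S_add, S_neg, S_smul, S_smul]
    exact ⟨-(S (stdE n (n - 1))) + S (stdE n n), by push_cast; ring⟩
  · rw [vB, if_neg he, S_sub, S_add, S_neg, S_smul]
    have hi2' : i < n := lt_of_le_of_ne hi2 he
    by_cases h1 : i = 1
    · subst h1
      rw [stdE_of_not 0 (by omega), S_stdE 1 le_rfl (by omega),
        S_stdE 2 (by omega) (by omega)]
      have h1' : Odd 1 := by decide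
      have h2' : ¬ Odd 2 := by decide
      rw [if_pos h1', if_neg h2']
      simp [S]
    · rw [S_stdE (i - 1) (by omega) (by omega), S_stdE i hi1 (by omega),
        S_stdE (i + 1) (by omega) (by omega)]
      by_cases hodd : Odd (i - 1)
      · have h3 : Odd (i + 1) := by
          rw [Nat.odd_iff] at *; omega
        rw [if_pos hodd, if_pos h3]
        by_cases hi : Odd i <;> simp [hi]
      · have h3 : ¬ Odd (i + 1) := by
          rw [Nat.odd_iff] at *; omega
        rw [if_neg hodd, if_neg h3]
        by_cases hi : Odd i <;> simp [hi]

lemma pV_mem (i : ℕ) (h1 : 1 ≤ i) (h2 : i ≤ n) :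
    pV n i ∈ AddSubgroup.closure (vB n '' Set.Icc 1 n) := by
  have hnpos : 1 ≤ n := le_trans h1 h2
  have hvn : vB n n = pV n n := by
    unfold vB pV dV
    rw [if_pos rfl, two_smul]
    abel
  have key : ∀ k : ℕ, ∀ i : ℕ, 1 ≤ i → i ≤ n → n - i ≤ k →
      pV n i ∈ AddSubgroup.closure (vB n '' Set.Icc 1 n) := by
    intro k
    induction k with
    | zero =>
      intro i h1 h2 h3
      have hin : i = n := by omega
      rw [hin, ← hvn]
      exact AddSubgroup.subset_closure ⟨n, ⟨hnpos, le_rfl⟩, rfl⟩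
    | succ k ih =>
      intro i h1 h2 h3
      by_cases he : i = n
      · rw [he, ← hvn]
        exact AddSubgroup.subset_closure ⟨n, ⟨hnpos, le_rfl⟩, rfl⟩
      · have hlt : i < n := lt_of_le_of_ne h2 he
        have hid : pV n i = vB n i + pV n (i + 1) := by
          simp only [vB, if_neg he, pV, dV, two_smul, Nat.add_sub_cancel]
          abel
        rw [hid]
        exact add_mem (AddSubgroup.subset_closure ⟨i, ⟨h1, h2⟩, rfl⟩)
          (ih (i + 1) (by omega) (by omega) (by omega))
  exact key (n - i) i h1 h2 le_rfl

lemma qV_mem (j : ℕ) (h1 : 1 ≤ j) (h2 : j ≤ n) :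
    qV n j ∈ AddSubgroup.closure (vB n '' Set.Icc 1 n) := by
  induction j, h1 using Nat.le_induction with
  | base =>
    have hq1 : qV n 1 = pV n 1 := by
      simp only [qV, pV, stdE_of_not 0 (by omega), Nat.cast_one, one_smul]
      abel
    rw [hq1]
    exact pV_mem 1 le_rfl h2
  | succ j hj ih =>
    have hid : qV n (j + 1) = qV n j + pV n (j + 1) := by
      simp only [qV, pV, Nat.add_sub_cancel, Nat.cast_add, Nat.cast_one, add_smul, one_smul]
      abel
    rw [hid]
    exact add_mem (ih (by omega)) (pV_mem (j + 1) (by omega) h2)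

end Stmt13Aux

open Stmt13Aux in
theorem stmt_13 (n : ℕ) (hn : 2 ≤ n) :
    ∀ a : Fin n → ℤ,
      a ∈ AddSubgroup.closure (vB n '' Set.Icc 1 n) ↔
        (2 : ℤ) ∣ ∑ k ∈ Finset.univ.filter (fun k : Fin n => Odd ((k : ℕ) + 1)), a k := by
  intro a
  constructor
  · intro ha
    exact (AddSubgroup.closure_le (K n)).2 (gen_subset hn) ha
  · intro ha
    have hMdvd : (2 : ℤ) ∣ ∑ k : Fin n, (((k : ℕ) : ℤ) + 1) * a k := by
      have hrw : (∑ k ∈ Finset.univ.filter (fun k : Fin n => Odd ((k : ℕ) + 1)), a k)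
          = ∑ k : Fin n, (if Odd ((k : ℕ) + 1) then a k else 0) :=
        Finset.sum_filter _ _
      have hdvd : (2 : ℤ) ∣ ∑ k : Fin n,
          ((((k : ℕ) : ℤ) + 1) * a k - (if Odd ((k : ℕ) + 1) then a k else 0)) := by
        apply Finset.dvd_sum
        intro k _
        rcases Nat.even_or_odd ((k : ℕ) + 1) with he | ho
        · rw [if_neg (Nat.not_odd_iff_even.mpr he), sub_zero]
          obtain ⟨t, ht⟩ := he
          refine ⟨(t : ℤ) * a k, ?_⟩
          have hc : (((k : ℕ) : ℤ) + 1) = 2 * (t : ℤ) := by exact_mod_cast (by omega : (k:ℕ) + 1 = 2 * t)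
          rw [hc]; ring
        · rw [if_pos ho]
          obtain ⟨t, ht⟩ := ho
          refine ⟨(t : ℤ) * a k, ?_⟩
          have hc : (((k : ℕ) : ℤ) + 1) = 2 * (t : ℤ) + 1 := by exact_mod_cast ht
          rw [hc]; ring
      have := dvd_add hdvd (hrw ▸ ha)
      simpa [Finset.sum_sub_distrib] using this
    obtain ⟨m, hm⟩ := hMdvd
    have hsum : (∑ k : Fin n, a k • qV n ((k : ℕ) + 1))
        = a + (∑ k : Fin n, (((k : ℕ) : ℤ) + 1) * a k) • dV n := by
      have hterm : ∀ k : Fin n, a k • qV n ((k : ℕ) + 1)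
          = Pi.single k (a k) + ((((k : ℕ) : ℤ) + 1) * a k) • dV n := by
        intro k
        rw [qV, stdE_fin, smul_add, smul_smul]
        congr 1
        · rw [← Pi.single_smul, smul_eq_mul, mul_one]
        · rw [mul_comm]
          norm_cast
      rw [Finset.sum_congr rfl (fun k _ => hterm k), Finset.sum_add_distrib,
        Finset.univ_sum_single, ← Finset.sum_smul]
    have ha2 : a = (∑ k : Fin n, a k • qV n ((k : ℕ) + 1)) - m • pV n n := by
      rw [hsum, hm]
      have hpn : pV n n = dV n + dV n := rfl
      rw [hpn, two_mul, add_smul, smul_add]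
      abel
    rw [ha2]
    refine sub_mem (AddSubgroup.sum_mem _ fun k _ => AddSubgroup.zsmul_mem _ ?_ _)
      (AddSubgroup.zsmul_mem _ (pV_mem n (by omega) le_rfl) m)
    exact qV_mem ((k : ℕ) + 1) (by omega) k.isLt
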